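/- Let q ∈ ℤ⁶ be nonzero and H = q^⊥ ⊂ ℝ⁶. The set of points p ∈ H that are 'very well approximated', i.e., such that there exists ε > 0 with infinitely many (n₁,n₂,m₁,m₂) ∈ ℤ⁴ satisfying 0 < |p·ψ(n₁,n₂,m₁,m₂)| ≤ max(|n₁|,|n₂|,|m₁|,|m₂|)^(-4-ε), has measure zero in H (with respect to the 5-dimensional Lebesgue measure on the hyperplane H). -/

import Mathlib

open MeasureTheory Set Filter
open scoped ENNReal NNReal RealInnerProductSpace

noncomputable section

namespace Stmt4Aux

abbrev E6 := EuclideanSpace ℝ (Fin 6)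

/-- Hausdorff 5-measure bound for a slab intersected with a ball, inside the
hyperplane orthogonal to a unit vector `u`. -/
lemma slab_bound (u v : E6) (hu : ‖u‖ = 1) (hv : ‖v‖ = 1)
    (huv : ⟪u, v⟫ = 0) {a R : ℝ} (ha : 0 ≤ a) (hR : 0 ≤ R) :
    μH[5] {p : E6 | ⟪u, p⟫ = 0 ∧ |⟪v, p⟫| ≤ a ∧ ‖p‖ ≤ R}
      ≤ ENNReal.ofReal (7776 * a * R ^ 4) := by
  -- extend {v, u} to an orthonormal basis with `b 0 = v`, `b 5 = u`
  classical
  set v0 : Fin 6 → E6 := fun i => if i = 0 then v else u with hv0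
  have hcard : Module.finrank ℝ E6 = Fintype.card (Fin 6) := by simp
  have horth : Orthonormal ℝ (({0, 5} : Set (Fin 6)).restrict v0) := by
    constructor
    · rintro ⟨i, hi⟩
      rcases hi with rfl | hi
      · show ‖v0 0‖ = 1
        simpa [v0] using hv
      · simp only [mem_singleton_iff] at hi
        subst hi
        show ‖v0 5‖ = 1
        simpa [v0] using hu
    · rintro ⟨i, hi⟩ ⟨j, hj⟩ hij
      have hij' : i ≠ j := by simpa [Subtype.ext_iff] using hij
      rcases hi with rfl | hi <;> rcases hj with rfl | hj
      · exact absurd rfl hij'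
      · simp only [mem_singleton_iff] at hj; subst hj
        have e0 : v0 0 = v := by simp [v0]
        have e5 : v0 5 = u := by simp [v0]
        show ⟪v0 0, v0 5⟫ = 0
        rw [e0, e5]
        rw [real_inner_comm]; exact huv
      · simp only [mem_singleton_iff] at hi; subst hi
        have e0 : v0 0 = v := by simp [v0]
        have e5 : v0 5 = u := by simp [v0]
        show ⟪v0 5, v0 0⟫ = 0
        rw [e0, e5]
        exact huv
      · simp only [mem_singleton_iff] at hi hj; subst hi; subst hj
        exact absurd rfl hij'
  obtain ⟨b, hb⟩ := horth.exists_orthonormalBasis_extension_of_card_eq hcard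
  have hb0 : b 0 = v := by simpa [v0] using hb 0 (by simp)
  have hb5 : b 5 = u := by simpa [v0] using hb 5 (by simp)
  -- the Lipschitz map from ℝ⁵ (sup metric)
  set F : (Fin 5 → ℝ) → E6 := fun y => ∑ i : Fin 5, y i • b i.castSucc with hF
  have horth5 : Orthonormal ℝ (fun i : Fin 5 => b i.castSucc) :=
    b.orthonormal.comp _ (Fin.castSucc_injective 5)
  have hFnorm : ∀ y : Fin 5 → ℝ, ‖F y‖ ^ 2 = ∑ i : Fin 5, (y i) ^ 2 := by
    intro y
    have := horth5.inner_sum y y Finset.univ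
    rw [← real_inner_self_eq_norm_sq]
    simpa [sq] using this
  have hlip : LipschitzWith 3 F := by
    apply LipschitzWith.of_dist_le_mul
    intro y z
    have hsub : F y - F z = F (y - z) := by
      simp [hF, sub_smul, Finset.sum_sub_distrib]
    rw [dist_eq_norm, hsub]
    have h1 : ‖F (y - z)‖ ^ 2 ≤ (3 * dist y z) ^ 2 := by
      rw [hFnorm]
      have hle : ∀ i : Fin 5, ((y - z) i) ^ 2 ≤ (dist y z) ^ 2 := by
        intro i
        have := dist_le_pi_dist y z i
        have h2 : |(y - z) i| ≤ dist y z := by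
          simpa [Real.dist_eq] using this
        calc ((y - z) i) ^ 2 = |(y - z) i| ^ 2 := (sq_abs _).symm
          _ ≤ (dist y z) ^ 2 := by
              apply pow_le_pow_left₀ (abs_nonneg _) h2
      calc ∑ i : Fin 5, ((y - z) i) ^ 2 ≤ ∑ _i : Fin 5, (dist y z) ^ 2 :=
            Finset.sum_le_sum fun i _ => hle i
        _ = 5 * (dist y z) ^ 2 := by
            rw [Finset.sum_const, Finset.card_univ, Fintype.card_fin, nsmul_eq_mul]
            norm_num
        _ ≤ (3 * dist y z) ^ 2 := by nlinarith [dist_nonneg (x := y) (y := z)]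
    have h3 : (0:ℝ) ≤ 3 * dist y z := by positivity
    have hc3 : ((3 : ℝ≥0) : ℝ) = 3 := by norm_num
    rw [hc3]
    nlinarith [norm_nonneg (F (y - z))]
  -- the box
  set c : Fin 5 → ℝ := fun i => if i = 0 then a else R with hc
  set box : Set (Fin 5 → ℝ) := Set.univ.pi fun i => Icc (-(c i)) (c i) with hbox
  have hsubset : {p : E6 | ⟪u, p⟫ = 0 ∧ |⟪v, p⟫| ≤ a ∧ ‖p‖ ≤ R} ⊆ F '' box := by
    rintro p ⟨hup, hvp, hnp⟩
    refine ⟨fun i => ⟪b i.castSucc, p⟫, ?_, ?_⟩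
    · intro i _
      dsimp only
      rcases eq_or_ne i 0 with rfl | hi
      · have : (Fin.castSucc (0 : Fin 5)) = (0 : Fin 6) := rfl
        rw [this, hb0]
        simpa [hc, abs_le] using hvp
      · have : |⟪b i.castSucc, p⟫| ≤ ‖b i.castSucc‖ * ‖p‖ := abs_real_inner_le_norm _ _
        rw [b.orthonormal.1 _, one_mul] at this
        have : |⟪b i.castSucc, p⟫| ≤ R := this.trans hnp
        simpa [hc, hi, abs_le] using this
    · have hrepr := b.sum_repr' p
      rw [Fin.sum_univ_castSucc] at hrepr
      have hlast : (Fin.last 5 : Fin 6) = 5 := rfl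
      rw [hlast, hb5, hup, zero_smul, add_zero] at hrepr
      exact hrepr
  calc μH[5] {p : E6 | ⟪u, p⟫ = 0 ∧ |⟪v, p⟫| ≤ a ∧ ‖p‖ ≤ R}
      ≤ μH[5] (F '' box) := measure_mono hsubset
    _ ≤ (3 : ℝ≥0∞) ^ (5:ℝ) * μH[5] box := by
        simpa using hlip.hausdorffMeasure_image_le (by norm_num : (0:ℝ) ≤ 5) box
    _ ≤ ENNReal.ofReal (7776 * a * R ^ 4) := by
        have hμbox : μH[(5:ℝ)] box = volume box := by
          rw [show ((5:ℝ)) = (Fintype.card (Fin 5) : ℝ) by simp,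
            MeasureTheory.hausdorffMeasure_pi_real]
        rw [hμbox, hbox, volume_pi_pi]
        have hvol : ∀ i : Fin 5, volume (Icc (-(c i)) (c i)) = ENNReal.ofReal (2 * c i) := by
          intro i
          rw [Real.volume_Icc]; ring_nf
        simp only [hvol]
        rw [Fin.prod_univ_five]
        have hc0 : c 0 = a := by simp [hc]
        have hcR : ∀ i : Fin 5, i ≠ 0 → c i = R := fun i hi => by simp [hc, hi]
        rw [hc0, hcR 1 (by decide), hcR 2 (by decide), hcR 3 (by decide), hcR 4 (by decide)]
        rw [← ENNReal.ofReal_mul (by positivity), ← ENNReal.ofReal_mul (by positivity),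
          ← ENNReal.ofReal_mul (by positivity), ← ENNReal.ofReal_mul (by positivity)]
        have h3 : (3 : ℝ≥0∞) ^ (5:ℝ) = ENNReal.ofReal 243 := by
          rw [show (3:ℝ≥0∞) = ENNReal.ofReal 3 by norm_num,
            ENNReal.ofReal_rpow_of_pos (by norm_num)]
          rw [show (5:ℝ) = ((5:ℕ):ℝ) by norm_num, Real.rpow_natCast]
          norm_num
        rw [h3, ← ENNReal.ofReal_mul (by norm_num)]
        apply ENNReal.ofReal_le_ofReal
        nlinarith [sq_nonneg R, sq_nonneg (R*R), mul_nonneg ha hR,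
          mul_nonneg (mul_nonneg ha hR) hR,
          mul_nonneg (mul_nonneg (mul_nonneg ha hR) hR) hR,
          mul_nonneg (mul_nonneg (mul_nonneg (mul_nonneg ha hR) hR) hR) hR]


lemma coord_le_norm (v : E6) (i : Fin 6) : |v i| ≤ ‖v‖ := by
  rw [EuclideanSpace.norm_eq, ← Real.sqrt_sq_eq_abs]
  apply Real.sqrt_le_sqrt
  have h : (v i) ^ 2 = ‖v i‖ ^ 2 := by simp [Real.norm_eq_abs, sq_abs]
  rw [h]
  exact Finset.single_le_sum (f := fun j => ‖v j‖ ^ 2) (fun j _ => sq_nonneg _)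
    (Finset.mem_univ i)

lemma inner_eq_sum (x y : E6) : ⟪x, y⟫ = ∑ i, x i * y i := by
  simp [PiLp.inner_apply, RCLike.inner_apply]
  exact Finset.sum_congr rfl fun _ _ => mul_comm _ _

/-- the integer coefficient vector -/
def ψz (x : ℤ × ℤ × ℤ × ℤ) : Fin 6 → ℤ :=
  ![x.2.1 ^ 2, x.1 * x.2.1, x.1 ^ 2, x.2.2.2 ^ 2, x.2.2.1 * x.2.2.2, x.2.2.1 ^ 2]

/-- the quadratic form value, as written in the statement -/
def Qf (p : E6) (x : ℤ × ℤ × ℤ × ℤ) : ℝ :=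
  p 0 * (x.2.1 : ℝ) ^ 2 + p 1 * (x.1 : ℝ) * (x.2.1 : ℝ) +
    p 2 * (x.1 : ℝ) ^ 2 + p 3 * (x.2.2.2 : ℝ) ^ 2 +
    p 4 * (x.2.2.1 : ℝ) * (x.2.2.2 : ℝ) + p 5 * (x.2.2.1 : ℝ) ^ 2

/-- the real coefficient vector -/
def ψreal (x : ℤ × ℤ × ℤ × ℤ) : E6 := WithLp.toLp 2 (fun i => ((ψz x i : ℝ)))

lemma Qf_eq_inner (p : E6) (x : ℤ × ℤ × ℤ × ℤ) :
    Qf p x = ⟪ψreal x, p⟫ := by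
  rw [inner_eq_sum, Fin.sum_univ_six]
  have h0 : ψreal x 0 = ((x.2.1 ^ 2 : ℤ) : ℝ) := rfl
  have h1 : ψreal x 1 = ((x.1 * x.2.1 : ℤ) : ℝ) := rfl
  have h2 : ψreal x 2 = ((x.1 ^ 2 : ℤ) : ℝ) := rfl
  have h3 : ψreal x 3 = ((x.2.2.2 ^ 2 : ℤ) : ℝ) := rfl
  have h4 : ψreal x 4 = ((x.2.2.1 * x.2.2.2 : ℤ) : ℝ) := rfl
  have h5 : ψreal x 5 = ((x.2.2.1 ^ 2 : ℤ) : ℝ) := rfl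
  rw [h0, h1, h2, h3, h4, h5]
  unfold Qf
  push_cast
  ring

lemma Qf_zero (p : E6) : Qf p 0 = 0 := by
  simp [Qf]

/-- the statement's max norm -/
def Nx (x : ℤ × ℤ × ℤ × ℤ) : ℝ :=
  max (max (|x.1| : ℝ) (|x.2.1| : ℝ)) (max (|x.2.2.1| : ℝ) (|x.2.2.2| : ℝ))

lemma Nx_nonneg (x : ℤ × ℤ × ℤ × ℤ) : 0 ≤ Nx x :=
  le_trans (abs_nonneg _) (le_trans (le_max_left _ _) (le_max_left _ _))

lemma one_le_Nx {x : ℤ × ℤ × ℤ × ℤ} (hx : x ≠ 0) : 1 ≤ Nx x := by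
  obtain ⟨a, b, c, d⟩ := x
  have h : a ≠ 0 ∨ b ≠ 0 ∨ c ≠ 0 ∨ d ≠ 0 := by
    by_contra h
    push_neg at h
    exact hx (by simp [Prod.ext_iff, h.1, h.2.1, h.2.2.1, h.2.2.2])
  have habs : ∀ n : ℤ, n ≠ 0 → (1:ℝ) ≤ |(n:ℝ)| := by
    intro n hn
    rw [← Int.cast_abs]
    exact_mod_cast Int.one_le_abs hn
  rcases h with h | h | h | h
  · exact le_trans (habs _ h) (le_trans (le_max_left _ _) (le_max_left _ _))
  · exact le_trans (habs _ h) (le_trans (le_max_right _ _) (le_max_left _ _))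
  · exact le_trans (habs _ h) (le_trans (le_max_left _ _) (le_max_right _ _))
  · exact le_trans (habs _ h) (le_trans (le_max_right _ _) (le_max_right _ _))

lemma max_abs_le_Nx (x : ℤ × ℤ × ℤ × ℤ) (hx : x ≠ 0) :
    max (|(x.1 : ℝ)|) 1 ≤ Nx x ∧ max (|(x.2.1 : ℝ)|) 1 ≤ Nx x ∧
      max (|(x.2.2.1 : ℝ)|) 1 ≤ Nx x ∧ max (|(x.2.2.2 : ℝ)|) 1 ≤ Nx x := by
  have h1 := one_le_Nx hx
  refine ⟨max_le ?_ h1, max_le ?_ h1, max_le ?_ h1, max_le ?_ h1⟩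
  · exact le_trans (le_max_left _ _) (le_max_left _ _)
  · exact le_trans (le_max_right _ _) (le_max_left _ _)
  · exact le_trans (le_max_left _ _) (le_max_right _ _)
  · exact le_trans (le_max_right _ _) (le_max_right _ _)

lemma prod_rpow_bound {N A B C D t : ℝ} (hA : 1 ≤ A) (hB : 1 ≤ B) (hC : 1 ≤ C) (hD : 1 ≤ D)
    (hNA : A ≤ N) (hNB : B ≤ N) (hNC : C ≤ N) (hND : D ≤ N) (ht : 0 < t) :
    N ^ (-(4 * t)) ≤ A ^ (-t) * (B ^ (-t) * (C ^ (-t) * D ^ (-t))) := by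
  have hA0 : (0:ℝ) ≤ A := by linarith
  have hB0 : (0:ℝ) ≤ B := by linarith
  have hC0 : (0:ℝ) ≤ C := by linarith
  have hD0 : (0:ℝ) ≤ D := by linarith
  have hN0 : (0:ℝ) < N := by linarith
  have hAt : A ^ t ≤ N ^ t := Real.rpow_le_rpow hA0 hNA ht.le
  have hBt : B ^ t ≤ N ^ t := Real.rpow_le_rpow hB0 hNB ht.le
  have hCt : C ^ t ≤ N ^ t := Real.rpow_le_rpow hC0 hNC ht.le
  have hDt : D ^ t ≤ N ^ t := Real.rpow_le_rpow hD0 hND ht.le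
  have hAtp : (0:ℝ) < A ^ t := Real.rpow_pos_of_pos (by linarith) t
  have hBtp : (0:ℝ) < B ^ t := Real.rpow_pos_of_pos (by linarith) t
  have hCtp : (0:ℝ) < C ^ t := Real.rpow_pos_of_pos (by linarith) t
  have hDtp : (0:ℝ) < D ^ t := Real.rpow_pos_of_pos (by linarith) t
  have hprod : A ^ t * (B ^ t * (C ^ t * D ^ t)) ≤ N ^ (4 * t) := by
    have heq : N ^ (4 * t) = N ^ t * (N ^ t * (N ^ t * N ^ t)) := by
      rw [show (4:ℝ) * t = t + (t + (t + t)) by ring]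
      rw [Real.rpow_add hN0, Real.rpow_add hN0, Real.rpow_add hN0]
    rw [heq]
    have hNtp : (0:ℝ) < N ^ t := Real.rpow_pos_of_pos hN0 t
    have h34 : C ^ t * D ^ t ≤ N ^ t * N ^ t := mul_le_mul hCt hDt hDtp.le hNtp.le
    have h234 : B ^ t * (C ^ t * D ^ t) ≤ N ^ t * (N ^ t * N ^ t) :=
      mul_le_mul hBt h34 (by positivity) hNtp.le
    exact mul_le_mul hAt h234 (by positivity) hNtp.le
  have hP : (0:ℝ) < A ^ t * (B ^ t * (C ^ t * D ^ t)) := by positivity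
  rw [Real.rpow_neg hN0.le, Real.rpow_neg hA0, Real.rpow_neg hB0, Real.rpow_neg hC0,
    Real.rpow_neg hD0, ← mul_inv, ← mul_inv, ← mul_inv]
  exact inv_anti₀ hP hprod

/-- the summable comparison function on ℤ -/
def fz (t : ℝ) (n : ℤ) : ℝ := |(n : ℝ)| ^ (-t) + (if n = 0 then 1 else 0)

lemma fz_nonneg (t : ℝ) (n : ℤ) : 0 ≤ fz t n := by
  unfold fz
  have := Real.rpow_nonneg (abs_nonneg ((n:ℝ))) (-t)
  split <;> linarith

lemma fz_summable {t : ℝ} (ht : 1 < t) : Summable (fz t) := by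
  apply Summable.add (Real.summable_abs_int_rpow ht)
  apply summable_of_ne_finset_zero (s := {(0:ℤ)})
  intro n hn
  simp only [Finset.mem_singleton] at hn
  simp [hn]

lemma max_rpow_le_fz {t : ℝ} (ht : 0 < t) (n : ℤ) :
    (max (|(n:ℝ)|) 1) ^ (-t) ≤ fz t n := by
  rcases eq_or_ne n 0 with rfl | hn
  · simp [fz, Real.zero_rpow (by linarith : -t ≠ 0)]
  · have h1 : (1:ℝ) ≤ |(n:ℝ)| := by
      rw [← Int.cast_abs]
      exact_mod_cast Int.one_le_abs hn
    rw [max_eq_left h1]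
    unfold fz
    simp [hn]

/-- the 4-variable comparison function -/
def gz (t : ℝ) (x : ℤ × ℤ × ℤ × ℤ) : ℝ :=
  fz t x.1 * (fz t x.2.1 * (fz t x.2.2.1 * fz t x.2.2.2))

lemma gz_nonneg (t : ℝ) (x : ℤ × ℤ × ℤ × ℤ) : 0 ≤ gz t x :=
  mul_nonneg (fz_nonneg t _) (mul_nonneg (fz_nonneg t _)
    (mul_nonneg (fz_nonneg t _) (fz_nonneg t _)))

set_option maxHeartbeats 1000000 in
lemma gz_summable {t : ℝ} (ht : 1 < t) : Summable (gz t) := by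
  have hf := fz_summable ht
  have hnn : (0 : ℤ → ℝ) ≤ fz t := fun n => fz_nonneg t n
  have h2 : Summable (fun y : ℤ × ℤ => fz t y.1 * fz t y.2) :=
    hf.mul_of_nonneg hf hnn hnn
  have hnn2 : (0 : ℤ × ℤ → ℝ) ≤ fun y : ℤ × ℤ => fz t y.1 * fz t y.2 :=
    fun y => mul_nonneg (fz_nonneg t _) (fz_nonneg t _)
  have h3 : Summable (fun y : ℤ × ℤ × ℤ =>
      fz t y.1 * ((fun z : ℤ × ℤ => fz t z.1 * fz t z.2) y.2)) :=
    hf.mul_of_nonneg h2 hnn hnn2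
  have hnn3 : (0 : ℤ × ℤ × ℤ → ℝ) ≤ fun y : ℤ × ℤ × ℤ =>
      fz t y.1 * ((fun z : ℤ × ℤ => fz t z.1 * fz t z.2) y.2) :=
    fun y => mul_nonneg (fz_nonneg t _) (mul_nonneg (fz_nonneg t _) (fz_nonneg t _))
  have h4 : Summable (fun x : ℤ × ℤ × ℤ × ℤ =>
      fz t x.1 * ((fun y : ℤ × ℤ × ℤ =>
        fz t y.1 * ((fun z : ℤ × ℤ => fz t z.1 * fz t z.2) y.2)) x.2)) :=
    hf.mul_of_nonneg h3 hnn hnn3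
  exact h4.congr fun x => rfl

lemma Nx_rpow_le_gz {ε : ℝ} (hε : 0 < ε) {x : ℤ × ℤ × ℤ × ℤ} (hx : x ≠ 0) :
    Nx x ^ (-4 - ε) ≤ gz (1 + ε / 4) x := by
  set t : ℝ := 1 + ε / 4 with hts
  have ht : 0 < t := by simp only [hts]; linarith
  obtain ⟨hA, hB, hC, hD⟩ := max_abs_le_Nx x hx
  have key := prod_rpow_bound (le_max_right _ _) (le_max_right _ _) (le_max_right _ _)
    (le_max_right _ _) hA hB hC hD ht
  have hexp : -(4 * t) = -4 - ε := by simp only [hts]; ring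
  rw [hexp] at key
  refine key.trans ?_
  unfold gz
  have h1 := max_rpow_le_fz ht x.1
  have h2 := max_rpow_le_fz ht x.2.1
  have h3 := max_rpow_le_fz ht x.2.2.1
  have h4 := max_rpow_le_fz ht x.2.2.2
  have p1 : (0:ℝ) ≤ (max (|(x.1:ℝ)|) 1) ^ (-t) := Real.rpow_nonneg (by positivity) _
  have p2 : (0:ℝ) ≤ (max (|(x.2.1:ℝ)|) 1) ^ (-t) := Real.rpow_nonneg (by positivity) _
  have p3 : (0:ℝ) ≤ (max (|(x.2.2.1:ℝ)|) 1) ^ (-t) := Real.rpow_nonneg (by positivity) _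
  have p4 : (0:ℝ) ≤ (max (|(x.2.2.2:ℝ)|) 1) ^ (-t) := Real.rpow_nonneg (by positivity) _
  have q2 := fz_nonneg t x.2.1
  have q3 := fz_nonneg t x.2.2.1
  have q4 := fz_nonneg t x.2.2.2
  apply mul_le_mul h1 _ (by positivity) (fz_nonneg t x.1)
  apply mul_le_mul h2 _ (by positivity) q2
  exact mul_le_mul h3 h4 p4 q3

/-- measure bound for a single `x` slab -/
lemma Ax_bound (q : Fin 6 → ℤ) (hq : q ≠ 0) (x : ℤ × ℤ × ℤ × ℤ) {δ R : ℝ}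
    (hδ : 0 ≤ δ) (hR : 0 ≤ R) :
    μH[5] {p : E6 | (∑ i, (q i : ℝ) * p i) = 0 ∧ 0 < |Qf p x| ∧ |Qf p x| ≤ δ ∧ ‖p‖ ≤ R}
      ≤ ENNReal.ofReal (7776 * (((∑ i, (q i) ^ 2 : ℤ) : ℝ) * δ) * R ^ 4) := by
  classical
  set qr : E6 := WithLp.toLp 2 (fun i => ((q i : ℝ))) with hqrdef
  set Qz : ℝ := ((∑ i, (q i) ^ 2 : ℤ) : ℝ) with hQz
  have hQz1 : (1:ℝ) ≤ Qz := by
    rw [hQz]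
    have : ∃ i, q i ≠ 0 := by
      by_contra h
      push_neg at h
      exact hq (funext h)
    obtain ⟨i, hi⟩ := this
    have h1 : (1:ℤ) ≤ ∑ j, (q j) ^ 2 := by
      calc (1:ℤ) ≤ (q i) ^ 2 := by nlinarith [Int.one_le_abs hi, abs_nonneg (q i), sq_abs (q i)]
        _ ≤ ∑ j, (q j) ^ 2 :=
          Finset.single_le_sum (f := fun j => (q j) ^ 2) (fun j _ => sq_nonneg _)
            (Finset.mem_univ i)
    exact_mod_cast h1
  have hQz0 : (0:ℝ) < Qz := by linarith
  have hqr0 : qr ≠ 0 := by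
    intro h
    apply hq
    funext i
    have h2 : qr i = 0 := by rw [h]; rfl
    have h3 : ((q i : ℝ)) = 0 := h2
    simp only [Pi.zero_apply]
    exact_mod_cast h3
  set ψr : E6 := ψreal x with hψr
  set S : ℝ := ⟪ψr, qr⟫ with hS
  set w : E6 := ψr - (S / Qz) • qr with hw
  have hqq : ⟪qr, qr⟫ = Qz := by
    rw [inner_eq_sum, hQz, hqrdef]
    push_cast
    congr 1
    funext i
    ring
  have hqw : ⟪qr, w⟫ = 0 := by
    rw [hw, inner_sub_right, real_inner_smul_right, hqq, real_inner_comm ψr qr, ← hS]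
    field_simp
    ring
  have hQfp : ∀ p : E6, (∑ i, (q i : ℝ) * p i) = 0 → ⟪qr, p⟫ = 0 := by
    intro p hp
    rw [inner_eq_sum, hqrdef]
    exact hp
  have hwQf : ∀ p : E6, (∑ i, (q i : ℝ) * p i) = 0 → ⟪w, p⟫ = Qf p x := by
    intro p hp
    rw [hw, inner_sub_left, real_inner_smul_left, hQfp p hp, hψr, ← Qf_eq_inner]
    ring
  rcases eq_or_ne w 0 with hw0 | hw0
  · -- the set is empty
    have hempty : {p : E6 | (∑ i, (q i : ℝ) * p i) = 0 ∧ 0 < |Qf p x| ∧ |Qf p x| ≤ δ ∧ ‖p‖ ≤ R}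
        = ∅ := by
      ext p
      simp only [mem_setOf_eq, mem_empty_iff_false, iff_false, not_and]
      intro hp habs
      exfalso
      have := hwQf p hp
      rw [hw0] at this
      simp only [inner_zero_left] at this
      rw [← this] at habs
      simp at habs
    rw [hempty]
    simp
  · -- main case
    have hwpos : 0 < ‖w‖ := norm_pos_iff.mpr hw0
    -- integer lower bound on ‖w‖
    have hwlow : Qz⁻¹ ≤ ‖w‖ := by
      set z : Fin 6 → ℤ := fun i => (∑ j, (q j) ^ 2) * ψz x i
        - (∑ j, ψz x j * q j) * q i with hz
      have hSz : S = ((∑ j, ψz x j * q j : ℤ) : ℝ) := by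
        rw [hS, inner_eq_sum, hψr, hqrdef]
        push_cast
        rfl
      have hcoord : ∀ i, (Qz • w) i = ((z i : ℤ) : ℝ) := by
        intro i
        have hcw : (Qz • w) i = Qz * (ψr i - (S / Qz) * qr i) := by
          simp [hw, PiLp.smul_apply, PiLp.sub_apply, smul_eq_mul]
        have hdist : Qz * (ψr i - (S / Qz) * qr i) = Qz * ψr i - S * qr i := by
          field_simp
        rw [hcw, hdist]
        have hψri : ψr i = ((ψz x i : ℤ) : ℝ) := rfl
        have hqri : qr i = ((q i : ℤ) : ℝ) := rfl
        rw [hψri, hqri, hSz, hQz]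
        simp only [hz]
        push_cast
        ring
      have hQw0 : Qz • w ≠ 0 := smul_ne_zero (by positivity) hw0
      have hiz : ∃ i, z i ≠ 0 := by
        by_contra h
        push_neg at h
        apply hQw0
        ext i
        rw [show ((0:E6) i) = (0:ℝ) from rfl] at *
        have := hcoord i
        rw [h i] at this
        simpa using this
      obtain ⟨i, hi⟩ := hiz
      have h1 : (1:ℝ) ≤ |(Qz • w) i| := by
        rw [hcoord i, ← Int.cast_abs]
        exact_mod_cast Int.one_le_abs hi
      have h2 : |(Qz • w) i| ≤ ‖Qz • w‖ := coord_le_norm _ i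
      have h3 : ‖Qz • w‖ = Qz * ‖w‖ := by
        rw [norm_smul, Real.norm_eq_abs, abs_of_pos hQz0]
      rw [(inv_le_iff_one_le_mul₀ hQz0 : Qz⁻¹ ≤ ‖w‖ ↔ 1 ≤ ‖w‖ * Qz)]
      nlinarith
    have hwinv : ‖w‖⁻¹ ≤ Qz := by
      rw [inv_le_iff_one_le_mul₀ hwpos]
      have h1 : Qz * Qz⁻¹ = 1 := mul_inv_cancel₀ (ne_of_gt hQz0)
      nlinarith [mul_le_mul_of_nonneg_left hwlow (le_of_lt hQz0)]
    set u : E6 := ‖qr‖⁻¹ • qr with hu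
    set v : E6 := ‖w‖⁻¹ • w with hv
    have hun : ‖u‖ = 1 := norm_smul_inv_norm hqr0
    have hvn : ‖v‖ = 1 := norm_smul_inv_norm hw0
    have huv : ⟪u, v⟫ = 0 := by
      rw [hu, hv, real_inner_smul_left, real_inner_smul_right, hqw]
      ring
    have hsub : {p : E6 | (∑ i, (q i : ℝ) * p i) = 0 ∧ 0 < |Qf p x| ∧ |Qf p x| ≤ δ ∧ ‖p‖ ≤ R}
        ⊆ {p : E6 | ⟪u, p⟫ = 0 ∧ |⟪v, p⟫| ≤ Qz * δ ∧ ‖p‖ ≤ R} := by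
      rintro p ⟨hp0, -, hple, hpn⟩
      refine ⟨?_, ?_, hpn⟩
      · rw [hu, real_inner_smul_left, hQfp p hp0]; ring
      · rw [hv, real_inner_smul_left, hwQf p hp0, abs_mul, abs_of_pos (inv_pos.mpr hwpos)]
        exact mul_le_mul hwinv hple (abs_nonneg _) (by linarith)
    refine le_trans (measure_mono hsub) ?_
    exact slab_bound u v hun hvn huv (by positivity) hR

/-- the slab family -/
def Aset (q : Fin 6 → ℤ) (ε R : ℝ) (x : ℤ × ℤ × ℤ × ℤ) : Set E6 :=
  {p | (∑ i, (q i : ℝ) * p i) = 0 ∧ 0 < |Qf p x| ∧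
    |Qf p x| ≤ Nx x ^ (-4 - ε) ∧ ‖p‖ ≤ R}

lemma Aset_zero (q : Fin 6 → ℤ) (ε R : ℝ) : Aset q ε R 0 = ∅ := by
  ext p
  simp only [Aset, mem_setOf_eq, mem_empty_iff_false, iff_false, not_and]
  intro _ h
  exfalso
  rw [Qf_zero] at h
  simp at h

lemma key_limsup (q : Fin 6 → ℤ) (hq : q ≠ 0) {ε R : ℝ} (hε : 0 < ε) (hR : 0 ≤ R) :
    μH[5] (Filter.limsup (Aset q ε R) Filter.cofinite) = 0 := by
  apply MeasureTheory.measure_limsup_cofinite_eq_zero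
  set Qz : ℝ := ((∑ i, (q i) ^ 2 : ℤ) : ℝ) with hQzd
  have hQznn : (0:ℝ) ≤ Qz := by
    rw [hQzd]
    have h : (0:ℤ) ≤ ∑ i, (q i) ^ 2 := Finset.sum_nonneg fun i _ => sq_nonneg _
    exact_mod_cast h
  set C : ℝ := 7776 * Qz * R ^ 4 with hC
  have hC0 : 0 ≤ C := by
    rw [hC]
    have := pow_nonneg hR 4
    nlinarith
  set t : ℝ := 1 + ε / 4 with htd
  have hbound : ∀ x : ℤ × ℤ × ℤ × ℤ,
      μH[5] (Aset q ε R x) ≤ ENNReal.ofReal (C * gz t x) := by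
    intro x
    rcases eq_or_ne x 0 with rfl | hx
    · rw [Aset_zero]
      simp
    · have hδ : (0:ℝ) ≤ Nx x ^ (-4 - ε) := Real.rpow_nonneg (Nx_nonneg x) _
      have h1 := Ax_bound q hq x hδ hR
      refine le_trans h1 ?_
      apply ENNReal.ofReal_le_ofReal
      have h2 := Nx_rpow_le_gz hε hx
      calc 7776 * (Qz * Nx x ^ (-4 - ε)) * R ^ 4
          = (7776 * Qz * R ^ 4) * Nx x ^ (-4 - ε) := by ring
        _ ≤ (7776 * Qz * R ^ 4) * gz t x := by
            apply mul_le_mul_of_nonneg_left h2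
            have := pow_nonneg hR 4
            nlinarith
        _ = C * gz t x := by rw [hC]
  have hsum : Summable (fun x : ℤ × ℤ × ℤ × ℤ => C * gz t x) :=
    (gz_summable (by rw [htd]; linarith)).mul_left C
  have hnn : ∀ x : ℤ × ℤ × ℤ × ℤ, 0 ≤ C * gz t x :=
    fun x => mul_nonneg hC0 (gz_nonneg t x)
  have hle : ∑' x : ℤ × ℤ × ℤ × ℤ, μH[5] (Aset q ε R x)
      ≤ ENNReal.ofReal (∑' x : ℤ × ℤ × ℤ × ℤ, C * gz t x) := by
    rw [ENNReal.ofReal_tsum_of_nonneg hnn hsum]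
    exact ENNReal.tsum_le_tsum hbound
  exact ne_top_of_le_ne_top ENNReal.ofReal_ne_top hle

end Stmt4Aux

open Stmt4Aux in
theorem stmt_4 (q : Fin 6 → ℤ) (hq : q ≠ 0) :
    μH[5] {p : EuclideanSpace ℝ (Fin 6) |
        (∑ i, (q i : ℝ) * p i) = 0 ∧
        ∃ ε > (0 : ℝ),
          {x : ℤ × ℤ × ℤ × ℤ |
            0 < |p 0 * (x.2.1 : ℝ) ^ 2 + p 1 * (x.1 : ℝ) * (x.2.1 : ℝ) +
                  p 2 * (x.1 : ℝ) ^ 2 + p 3 * (x.2.2.2 : ℝ) ^ 2 +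
                  p 4 * (x.2.2.1 : ℝ) * (x.2.2.2 : ℝ) + p 5 * (x.2.2.1 : ℝ) ^ 2| ∧
            |p 0 * (x.2.1 : ℝ) ^ 2 + p 1 * (x.1 : ℝ) * (x.2.1 : ℝ) +
                  p 2 * (x.1 : ℝ) ^ 2 + p 3 * (x.2.2.2 : ℝ) ^ 2 +
                  p 4 * (x.2.2.1 : ℝ) * (x.2.2.2 : ℝ) + p 5 * (x.2.2.1 : ℝ) ^ 2| ≤
              (max (max (|x.1| : ℝ) (|x.2.1| : ℝ)) (max (|x.2.2.1| : ℝ) (|x.2.2.2| : ℝ))) ^ (-4 - ε)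
            }.Infinite} = 0 := by
  classical
  have hset : {p : EuclideanSpace ℝ (Fin 6) |
        (∑ i, (q i : ℝ) * p i) = 0 ∧
        ∃ ε > (0 : ℝ),
          {x : ℤ × ℤ × ℤ × ℤ |
            0 < |p 0 * (x.2.1 : ℝ) ^ 2 + p 1 * (x.1 : ℝ) * (x.2.1 : ℝ) +
                  p 2 * (x.1 : ℝ) ^ 2 + p 3 * (x.2.2.2 : ℝ) ^ 2 +
                  p 4 * (x.2.2.1 : ℝ) * (x.2.2.2 : ℝ) + p 5 * (x.2.2.1 : ℝ) ^ 2| ∧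
            |p 0 * (x.2.1 : ℝ) ^ 2 + p 1 * (x.1 : ℝ) * (x.2.1 : ℝ) +
                  p 2 * (x.1 : ℝ) ^ 2 + p 3 * (x.2.2.2 : ℝ) ^ 2 +
                  p 4 * (x.2.2.1 : ℝ) * (x.2.2.2 : ℝ) + p 5 * (x.2.2.1 : ℝ) ^ 2| ≤
              (max (max (|x.1| : ℝ) (|x.2.1| : ℝ)) (max (|x.2.2.1| : ℝ) (|x.2.2.2| : ℝ))) ^ (-4 - ε)
            }.Infinite}
      = {p : E6 | (∑ i, (q i : ℝ) * p i) = 0 ∧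
          ∃ ε > (0 : ℝ),
            {x : ℤ × ℤ × ℤ × ℤ |
              0 < |Qf p x| ∧ |Qf p x| ≤ Nx x ^ (-4 - ε)}.Infinite} := rfl
  rw [hset]
  have hsubset : {p : E6 | (∑ i, (q i : ℝ) * p i) = 0 ∧
          ∃ ε > (0 : ℝ),
            {x : ℤ × ℤ × ℤ × ℤ |
              0 < |Qf p x| ∧ |Qf p x| ≤ Nx x ^ (-4 - ε)}.Infinite}
      ⊆ ⋃ (k : ℕ), ⋃ (m : ℕ),
          Filter.limsup (Aset q (1 / ((k:ℝ) + 1)) m) Filter.cofinite := by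
    rintro p ⟨hp0, ε, hε, hinf⟩
    obtain ⟨k, hk⟩ := exists_nat_one_div_lt hε
    refine Set.mem_iUnion.mpr ⟨k, Set.mem_iUnion.mpr ⟨⌈‖p‖⌉₊, ?_⟩⟩
    rw [Filter.mem_limsup_iff_frequently_mem, Filter.frequently_cofinite_iff_infinite]
    apply Set.Infinite.mono _ hinf
    intro x hx
    obtain ⟨hpos, hle⟩ := hx
    have hx0 : x ≠ 0 := by
      intro h
      subst h
      rw [Qf_zero] at hpos
      simp at hpos
    refine ⟨hp0, hpos, ?_, ?_⟩
    · refine hle.trans ?_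
      apply Real.rpow_le_rpow_of_exponent_le (one_le_Nx hx0)
      have hk' : (1:ℝ) / ((k:ℝ) + 1) < ε := hk
      linarith
    · exact Nat.le_ceil ‖p‖
  refine measure_mono_null hsubset ?_
  apply measure_iUnion_null
  intro k
  apply measure_iUnion_null
  intro m
  exact key_limsup q hq (by positivity) (Nat.cast_nonneg m)
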